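/- For a finite set F = {f_1 < ... < f_k} of positive integers and n ∈ σ_F, the exceptional Hermite polynomial H_n^F(x), defined as the Wronskian-type (k+1)×(k+1) determinant with first row (H_{n-u_F}(x), H_{n-u_F}'(x), ..., H_{n-u_F}^{(k)}(x)) and remaining rows (H_f(x), H_f'(x), ..., H_f^{(k)}(x)) for f ∈ F, is a polynomial of degree exactly n. -/

import Mathlib

open Polynomial

/-- The (physicists') Hermite polynomial `H_n`. -/
noncomputable def hermiteP (n : ℕ) : Polynomial ℝ :=
  (n.factorial : ℝ) •
    ∑ j ∈ Finset.range (n / 2 + 1),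
      ((-1 : ℝ) ^ j / ((j.factorial : ℝ) * ((n - 2 * j).factorial : ℝ))) •
        (C (2 : ℝ) * X) ^ (n - 2 * j)

/-- Hermite polynomial with integer index; zero for negative index. -/
noncomputable def hermiteZ (m : ℤ) : Polynomial ℝ :=
  if m < 0 then 0 else hermiteP m.toNat

/-- `u_F = ∑_{f ∈ F} f - binom(k+1,2)`. -/
def uF (F : Finset ℕ) : ℤ :=
  (∑ f ∈ F, (f : ℤ)) - ((F.card + 1).choose 2 : ℤ)

/-- The exceptional Hermite polynomial `H_n^F`: the `(k+1)×(k+1)` Wronskian-type determinant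
with first row `(H_{n-u_F}^{(j)}(x))_{j=0}^k` and remaining rows `(H_f^{(j)}(x))_{j=0}^k`
for `f ∈ F`. -/
noncomputable def excHermite (F : Finset ℕ) (n : ℤ) : Polynomial ℝ :=
  Matrix.det (Matrix.of (fun i j : Fin (F.card + 1) =>
    Fin.cases
      (derivative^[(j : ℕ)] (hermiteZ (n - uF F)))
      (fun i' : Fin F.card => derivative^[(j : ℕ)] (hermiteP (F.orderIsoOfFin rfl i' : ℕ)))
      i))

lemma hermiteP_natDegree_le (n : ℕ) : (hermiteP n).natDegree ≤ n := by
  unfold hermiteP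
  refine (natDegree_smul_le _ _).trans ?_
  refine natDegree_sum_le_of_forall_le _ _ fun j hj => ?_
  refine (natDegree_smul_le _ _).trans ?_
  refine (natDegree_pow_le).trans ?_
  rw [natDegree_C_mul_X (2:ℝ) two_ne_zero]
  omega

lemma hermiteP_coeff_self (n : ℕ) : (hermiteP n).coeff n = 2 ^ n := by
  unfold hermiteP
  rw [coeff_smul, finset_sum_coeff]
  have hterm : ∀ j, ((((-1 : ℝ) ^ j / ((j.factorial : ℝ) * ((n - 2 * j).factorial : ℝ))) •
        (C (2 : ℝ) * X) ^ (n - 2 * j)).coeff n) =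
      ((-1 : ℝ) ^ j / ((j.factorial : ℝ) * ((n - 2 * j).factorial : ℝ))) *
        (2 ^ (n - 2*j) * (if n = n - 2*j then 1 else 0)) := by
    intro j
    rw [coeff_smul, mul_pow, ← C_pow, coeff_C_mul, coeff_X_pow, smul_eq_mul]
  rw [Finset.sum_congr rfl fun j _ => hterm j]
  rw [Finset.sum_eq_single 0]
  · have h0 : (n.factorial : ℝ) ≠ 0 := Nat.cast_ne_zero.mpr n.factorial_ne_zero
    simp only [Nat.mul_zero, Nat.sub_zero, if_pos rfl, if_true, pow_zero, Nat.factorial_zero, Nat.cast_one, one_mul,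
      mul_one, smul_eq_mul]
    field_simp
  · intro j hj hj0
    have hjle : j ≤ n / 2 := Nat.lt_succ_iff.mp (Finset.mem_range.mp hj)
    have : n ≠ n - 2*j := by omega
    rw [if_neg this, mul_zero, mul_zero]
  · intro h
    exact absurd (Finset.mem_range.mpr (Nat.succ_pos _)) h

/-- Coefficient of a product at the sum of degree bounds. -/
lemma coeff_prod_of_natDegree_le' {ι : Type*} (s : Finset ι) (f : ι → Polynomial ℝ) (e : ι → ℕ)
    (h : ∀ i ∈ s, (f i).natDegree ≤ e i) :
    (∏ i ∈ s, f i).coeff (∑ i ∈ s, e i) = ∏ i ∈ s, (f i).coeff (e i) := by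
  induction s using Finset.cons_induction with
  | empty => simp
  | cons a s ha ih =>
    rw [Finset.prod_cons, Finset.sum_cons, Finset.prod_cons,
      coeff_mul_add_eq_of_natDegree_le (h a (Finset.mem_cons_self _ _))
        ((natDegree_prod_le _ _).trans (Finset.sum_le_sum fun i hi => h i (Finset.mem_cons_of_mem hi))),
      ih fun i hi => h i (Finset.mem_cons_of_mem hi)]

set_option maxHeartbeats 1000000 in
/-- Degree bound and top coefficient of a Wronskian-type determinant. -/
lemma wronskian_det_coeff {N : ℕ} (p : Fin N → Polynomial ℝ) (d : Fin N → ℕ)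
    (hdeg : ∀ i, (p i).natDegree ≤ d i) (D : ℕ)
    (hD : (D : ℤ) + ∑ j : Fin N, (j.val : ℤ) = ∑ i, (d i : ℤ)) :
    ((Matrix.of fun i j : Fin N => derivative^[j.val] (p i)).det).natDegree ≤ D ∧
    ((Matrix.of fun i j : Fin N => derivative^[j.val] (p i)).det).coeff D =
      (∏ i, (p i).coeff (d i)) * (Matrix.vandermonde fun i => ((d i : ℕ) : ℝ)).det := by
  have key : ∀ σ : Equiv.Perm (Fin N),
      ((∏ i, derivative^[i.val] (p (σ i))).coeff D =
        ∏ i, ((p (σ i)).coeff (d (σ i)) * (((d (σ i)).descFactorial i.val : ℕ) : ℝ))) ∧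
      (∏ i, derivative^[i.val] (p (σ i))).natDegree ≤ D := by
    intro σ
    by_cases hcase : ∀ i : Fin N, i.val ≤ d (σ i)
    · set e : Fin N → ℕ := fun i => d (σ i) - i.val with he_def
      have hqdeg : ∀ i : Fin N, (derivative^[i.val] (p (σ i))).natDegree ≤ e i := fun i =>
        (natDegree_iterate_derivative _ _).trans (Nat.sub_le_sub_right (hdeg _) _)
      have hsum : ∑ i, e i = D := by
        have h1 : (∑ i, e i : ℤ) = ∑ i, ((d (σ i) : ℤ) - (i.val : ℤ)) := by
          push_cast
          refine Finset.sum_congr rfl fun i _ => ?_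
          have := hcase i
          push_cast [he_def, Nat.cast_sub this]
          ring
        have h2 : ∑ i, (d (σ i) : ℤ) = ∑ i, (d i : ℤ) := Equiv.sum_comp σ fun i => (d i : ℤ)
        have : (∑ i, e i : ℤ) = (D : ℤ) := by
          rw [h1, Finset.sum_sub_distrib, h2, ← hD]; ring
        exact_mod_cast this
      rw [← hsum]
      constructor
      · rw [coeff_prod_of_natDegree_le' _ _ _ fun i _ => hqdeg i]
        refine Finset.prod_congr rfl fun i _ => ?_
        have hei : e i + (i : ℕ) = d (σ i) := Nat.sub_add_cancel (hcase i)
        rw [coeff_iterate_derivative, hei, nsmul_eq_mul, mul_comm]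
      · exact (natDegree_prod_le _ _).trans (Finset.sum_le_sum fun i _ => hqdeg i)
    · push_neg at hcase
      obtain ⟨i₀, hi₀⟩ := hcase
      have hz : derivative^[i₀.val] (p (σ i₀)) = 0 :=
        iterate_derivative_eq_zero (lt_of_le_of_lt (hdeg _) hi₀)
      have hp0 : (∏ i, derivative^[i.val] (p (σ i))) = 0 :=
        Finset.prod_eq_zero (Finset.mem_univ i₀) hz
      constructor
      · rw [hp0, coeff_zero]
        refine (Finset.prod_eq_zero (Finset.mem_univ i₀) ?_).symm
        rw [Nat.descFactorial_eq_zero_iff_lt.mpr hi₀]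
        simp
      · rw [hp0]; simp
  constructor
  · rw [Matrix.det_apply]
    refine natDegree_sum_le_of_forall_le _ _ fun σ _ => ?_
    rw [Units.smul_def, zsmul_eq_mul]
    refine natDegree_mul_le.trans ?_
    rw [natDegree_intCast]
    simpa using (key σ).2
  · rw [Matrix.det_apply, finset_sum_coeff]
    have : ∀ σ : Equiv.Perm (Fin N),
        ((Equiv.Perm.sign σ • ∏ i, (Matrix.of fun i j : Fin N =>
            derivative^[j.val] (p i)) (σ i) i).coeff D) =
          ((Equiv.Perm.sign σ : ℤ) •
            ∏ i, (((p (σ i)).coeff (d (σ i))) *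
              (((d (σ i)).descFactorial i.val : ℕ) : ℝ))) := by
      intro σ
      rw [Units.smul_def, coeff_smul]
      congr 1
      simpa using (key σ).1
    rw [Finset.sum_congr rfl fun σ _ => this σ]
    have hdet : (∑ σ : Equiv.Perm (Fin N), (Equiv.Perm.sign σ : ℤ) •
          ∏ i, (((p (σ i)).coeff (d (σ i))) * (((d (σ i)).descFactorial i.val : ℕ) : ℝ))) =
        (Matrix.of fun i j : Fin N =>
          ((p i).coeff (d i)) * (((d i).descFactorial j.val : ℕ) : ℝ)).det := by
      simp only [Matrix.det_apply, Units.smul_def]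
      rfl
    rw [hdet]
    refine (Matrix.det_mul_column (fun i => (p i).coeff (d i))
      (Matrix.of fun i j : Fin N => (((d i).descFactorial j.val : ℕ) : ℝ))).trans ?_
    congr 1
    rw [Matrix.det_eval_matrixOfPolynomials_eq_det_vandermonde
      (fun i => ((d i : ℕ) : ℝ)) (fun j => descPochhammer ℝ j.val)
      (fun j => descPochhammer_natDegree ℝ j.val) (fun j => monic_descPochhammer ℝ j.val)]
    congr 1
    ext i j
    exact (descPochhammer_eval_eq_descFactorial ℝ _ _).symm

theorem excHermite_degree (F : Finset ℕ) (hFne : F.Nonempty) (hFpos : ∀ f ∈ F, 0 < f)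
    (n : ℕ) (hn1 : uF F ≤ (n : ℤ)) (hn2 : ∀ f ∈ F, (n : ℤ) ≠ uF F + f) :
    (excHermite F n).natDegree = n ∧ excHermite F n ≠ 0 := by
  classical
  set k := F.card with hk
  set m : ℕ := ((n : ℤ) - uF F).toNat with hm
  have hmz : (m : ℤ) = (n : ℤ) - uF F := Int.toNat_of_nonneg (sub_nonneg.mpr hn1)
  set f : Fin k → ℕ := fun i => (F.orderIsoOfFin rfl i : ℕ) with hf
  set d : Fin (k + 1) → ℕ := Fin.cases m f with hd
  have hmat : excHermite F n =
      (Matrix.of fun i j : Fin (k + 1) => derivative^[j.val] (hermiteP (d i))).det := by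
    unfold excHermite
    congr 1
    ext i j
    refine Fin.cases ?_ (fun i' => ?_) i
    · have : hermiteZ ((n : ℤ) - uF F) = hermiteP m := by
        unfold hermiteZ
        rw [if_neg (not_lt.mpr (sub_nonneg.mpr hn1))]
      simp [this, hd]
    · simp [hd, hf]
  have hfmem : ∀ i : Fin k, f i ∈ F := fun i => (F.orderIsoOfFin rfl i).2
  have hfinj : Function.Injective f := fun a b hab => by
    exact (F.orderIsoOfFin rfl).injective (Subtype.ext hab)
  have hmne : ∀ i : Fin k, m ≠ f i := by
    intro i hmi
    apply hn2 (f i) (hfmem i)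
    have : (m : ℤ) = (f i : ℤ) := by exact_mod_cast hmi
    omega
  have hdinj : Function.Injective d := by
    intro a b hab
    refine Fin.cases (fun hab => ?_) (fun a' hab => ?_) a hab
    · refine Fin.cases (fun hab => rfl) (fun b' hab => ?_) b hab
      · exact absurd (by simpa [hd] using hab) (hmne b')
    · refine Fin.cases (fun hab => ?_) (fun b' hab => ?_) b hab
      · exact absurd (by simpa [hd] using hab.symm) (hmne a')
      · have : a' = b' := hfinj (by simpa [hd] using hab)
        rw [this]
  have hsumf : ∑ i : Fin k, (f i : ℤ) = ∑ x ∈ F, (x : ℤ) := by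
    rw [← Finset.sum_coe_sort F fun x => (x : ℤ)]
    exact Fintype.sum_equiv (F.orderIsoOfFin rfl).toEquiv _ _ fun i => rfl
  have hsumj : ∑ j : Fin (k + 1), (j.val : ℤ) = ((k + 1).choose 2 : ℤ) := by
    have h1 : ∑ j : Fin (k + 1), j.val = ∑ j ∈ Finset.range (k + 1), j :=
      Fin.sum_univ_eq_sum_range (fun j => j) (k + 1)
    have h2 : (∑ j ∈ Finset.range (k + 1), j) * 2 = (k + 1) * k :=
      by simpa using Finset.sum_range_id_mul_two (k + 1)
    have h3 : (k + 1).choose 2 = (k + 1) * k / 2 := by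
      simp [Nat.choose_two_right]
    have : ∑ j : Fin (k + 1), j.val = (k + 1).choose 2 := by omega
    exact_mod_cast congrArg (Nat.cast : ℕ → ℤ) this
  have hsumd : ∑ i : Fin (k + 1), (d i : ℤ) = (m : ℤ) + ∑ x ∈ F, (x : ℤ) := by
    rw [Fin.sum_univ_succ, ← hsumf]
    simp only [hd, Fin.cases_zero, Fin.cases_succ]
  have hD : ((n : ℕ) : ℤ) + ∑ j : Fin (k + 1), (j.val : ℤ) = ∑ i, (d i : ℤ) := by
    rw [hsumd, hsumj]
    have huf : uF F = (∑ x ∈ F, (x : ℤ)) - ((k + 1).choose 2 : ℤ) := by rw [uF, hk]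
    omega
  obtain ⟨hle, hcoeff⟩ := wronskian_det_coeff (fun i => hermiteP (d i)) d
    (fun i => hermiteP_natDegree_le (d i)) n hD
  have hvne : (Matrix.vandermonde fun i => ((d i : ℕ) : ℝ)).det ≠ 0 :=
    Matrix.det_vandermonde_ne_zero_iff.mpr fun a b hab =>
      hdinj (Nat.cast_injective hab)
  have hprodne : (∏ i, (hermiteP (d i)).coeff (d i)) ≠ 0 := by
    refine Finset.prod_ne_zero_iff.mpr fun i _ => ?_
    rw [hermiteP_coeff_self]
    positivity
  have hcne : (excHermite F n).coeff n ≠ 0 := by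
    rw [hmat, hcoeff]
    exact mul_ne_zero hprodne hvne
  have hne : excHermite F n ≠ 0 := fun h0 => by
    rw [h0, coeff_zero] at hcne
    exact hcne rfl
  refine ⟨le_antisymm (hmat ▸ hle) (le_natDegree_of_ne_zero hcne), hne⟩
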